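/- Let f : A → B be a surjective homomorphism of Noetherian commutative rings with identity, and let x₁,…,x_p ∈ A be elements such that f(x₁),…,f(x_p) are not zero-divisors in B. Let S be the multiplicative set generated by x₁,…,x_p. If the localized homomorphism S⁻¹A → S⁻¹B is an isomorphism, and for each i the induced homomorphism A/(xᵢ) → B/(f(xᵢ)) is an isomorphism, then f is an isomorphism. -/

import Mathlib

/-- **Lemma A.1.** Let `f : A → B` be a surjective homomorphism of Noetherian commutative
rings, `x 1, …, x p ∈ A` elements whose images are nonzerodivisors in `B`, and `S` the
multiplicative set generated by the `x i`. If the localized map `S⁻¹A → S⁻¹B` is an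
isomorphism and each induced map `A/(x i) → B/(f (x i))` is an isomorphism, then `f` is an
isomorphism. -/
theorem cluster_config_ring_iso
    {A B : Type*} [CommRing A] [CommRing B]
    [IsNoetherianRing A] [IsNoetherianRing B]
    (f : A →+* B) (hf : Function.Surjective f)
    {p : ℕ} (x : Fin p → A)
    (hx : ∀ i, f (x i) ∈ nonZeroDivisors B)
    (S : Submonoid A) (hS : S = Submonoid.closure (Set.range x))
    (T : Submonoid B) (hT : T = S.map f)
    (hle : S ≤ T.comap f)
    (hloc : Function.Bijective
      (IsLocalization.map (Localization T) f hle : Localization S →+* Localization T))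
    (hquot : ∀ i, Function.Bijective
      (Ideal.quotientMap (Ideal.span {f (x i)}) f
        (by
          rw [Ideal.span_le, Set.singleton_subset_iff]
          exact Ideal.subset_span (Set.mem_singleton _)))) :
    Function.Bijective f := by
  refine ⟨?_, hf⟩
  rw [injective_iff_map_eq_zero]
  -- Step 1: ker f ⊆ (x i) • ker f for each i
  have hstep : ∀ i, (RingHom.ker f : Ideal A) ≤ Ideal.span {x i} • RingHom.ker f := by
    intro i a ha
    have h0 : (Ideal.quotientMap (Ideal.span {f (x i)}) f
        (by
          rw [Ideal.span_le, Set.singleton_subset_iff]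
          exact Ideal.subset_span (Set.mem_singleton _)))
        (Ideal.Quotient.mk (Ideal.span {x i}) a) = 0 := by
      rw [Ideal.quotientMap_mk, RingHom.mem_ker.mp ha, map_zero]
    have hmk : (Ideal.Quotient.mk (Ideal.span {x i}) a) = 0 :=
      (injective_iff_map_eq_zero _).mp (hquot i).injective _ h0
    have hmem : a ∈ Ideal.span {x i} := by
      rwa [Ideal.Quotient.eq_zero_iff_mem] at hmk
    obtain ⟨c, hc⟩ := Ideal.mem_span_singleton.mp hmem
    have hfc : f c = 0 := by
      have : f c * f (x i) = 0 := by
        rw [mul_comm, ← map_mul, ← hc, RingHom.mem_ker.mp ha]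
      exact (mul_right_mem_nonZeroDivisors_eq_zero_iff (hx i)).mp this
    rw [hc]
    exact Ideal.mul_mem_mul (Ideal.subset_span (Set.mem_singleton _))
      (RingHom.mem_ker.mpr hfc)
  -- Step 2: Nakayama gives annihilating elements
  have key : ∀ s ∈ S, ∀ a ∈ RingHom.ker f, s * a = 0 → a = 0 := by
    rw [hS]
    intro s hs
    induction hs using Submonoid.closure_induction with
    | one => intro a _ h; simpa using h
    | mul s t _ _ ihs iht =>
      intro a ha h
      exact iht a ha (ihs (t * a) (Ideal.mul_mem_left _ _ ha) (by rw [← mul_assoc]; exact h))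
    | mem s hs =>
      obtain ⟨i, rfl⟩ := hs
      intro a ha h
      obtain ⟨r, hr, hr'⟩ := Submodule.exists_mem_and_smul_eq_self_of_fg_of_le_smul
        (Ideal.span {x i}) (RingHom.ker f) (IsNoetherian.noetherian _) (hstep i)
      obtain ⟨c, hc⟩ := Ideal.mem_span_singleton.mp hr
      have := hr' a ha
      rw [hc, smul_eq_mul, mul_assoc] at this
      rw [← this, mul_left_comm, h, mul_zero]
  -- Step 3: localization injectivity
  intro a ha
  have hzero : algebraMap A (Localization S) a = 0 := by
    apply hloc.injective
    rw [IsLocalization.map_eq, ha, map_zero, map_zero]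
  obtain ⟨s, hs⟩ := (IsLocalization.map_eq_zero_iff S (Localization S) a).mp hzero
  exact key s s.2 a (RingHom.mem_ker.mpr ha) hs
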